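/- arXiv:2304.07416 — 3 statements merged into one kernel-verified Lean document; each statement's English description precedes it below -/
import Mathlib

section
/- A pairwise disjoint sequence in a Banach lattice is absolutely weakly null if and only if it is weakly null. -/
set_option linter.unusedSectionVars false

open Filter Topology Pointwise MeasureTheory


section Defs

variable {E : Type*} [NormedAddCommGroup E] [Lattice E] [HasSolidNorm E] [IsOrderedAddMonoid E] [NormedSpace ℝ E]

/-- The pseudometric on a Banach lattice induced by a positive continuous linear functional `f`,
given by `dist x y = f |x - y|`. -/
noncomputable def absSeminormDist (f : E →L[ℝ] ℝ) (hf : ∀ x : E, 0 ≤ x → 0 ≤ f x) :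
    PseudoMetricSpace E where
  dist x y := f |x - y|
  dist_self x := by simp
  dist_comm x y := by simp [abs_sub_comm]
  dist_triangle x y z := by
    have h1 : |x - z| ≤ |x - y| + |y - z| := by
      calc |x - z| = |(x - y) + (y - z)| := by abel_nf
      _ ≤ |x - y| + |y - z| := abs_add_le _ _
    have h2 := hf (|x - y| + |y - z| - |x - z|) (sub_nonneg.mpr h1)
    simp only [map_sub, map_add] at h2
    show f |x - z| ≤ f |x - y| + f |y - z|
    linarith

/-- The absolute weak topology `|σ|(E, E*)` on a Banach lattice `E`: the topology generated by
the lattice seminorms `x ↦ |x*|(|x|) = x*(|x|)`, for `x*` ranging over the positive continuous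
linear functionals on `E`. -/
noncomputable def absWeakTopology (E : Type*) [NormedAddCommGroup E] [Lattice E] [HasSolidNorm E] [IsOrderedAddMonoid E] [NormedSpace ℝ E] :
    TopologicalSpace E :=
  ⨅ f : {f : E →L[ℝ] ℝ // ∀ x : E, 0 ≤ x → 0 ≤ f x},
    (absSeminormDist f.1 f.2).toUniformSpace.toTopologicalSpace

end Defs

section Aux

variable {E : Type*} [NormedAddCommGroup E] [Lattice E] [HasSolidNorm E] [IsOrderedAddMonoid E] [NormedSpace ℝ E]

lemma myInfAddLe {x y a : E} (hx : 0 ≤ x) (hy : 0 ≤ y) (ha : 0 ≤ a) :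
    (x + y) ⊓ a ≤ x ⊓ a + y ⊓ a := by
  have h : x ⊓ a + y ⊓ a = ((x + y) ⊓ (a + y)) ⊓ ((x + a) ⊓ (a + a)) := by
    rw [add_inf, inf_add, inf_add]
  rw [h]
  refine le_inf (le_inf inf_le_left ?_) (le_inf ?_ ?_)
  · exact inf_le_right.trans (le_add_of_nonneg_right hy)
  · exact inf_le_right.trans (le_add_of_nonneg_left hx)
  · exact inf_le_right.trans (le_add_of_nonneg_left ha)

lemma myDisjSmul {a b : E} (ha : 0 ≤ a) (hb : 0 ≤ b) (h : a ⊓ b = 0) (k : ℕ) :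
    a ⊓ (k • b) = 0 := by
  induction k with
  | zero => simpa using inf_eq_right.2 ha
  | succ k ih =>
    refine le_antisymm ?_ (le_inf ha (nsmul_nonneg hb _))
    have h1 : a ⊓ ((k • b) + b) ≤ a ⊓ (k • b) + a ⊓ b := by
      rw [inf_comm a, inf_comm a (k • b), inf_comm a b]
      exact myInfAddLe (nsmul_nonneg hb _) hb ha
    rw [succ_nsmul]
    calc a ⊓ (k • b + b) ≤ a ⊓ (k • b) + a ⊓ b := h1
    _ = 0 := by rw [ih, h, add_zero]

lemma myDisjSum {b : E} (hb : 0 ≤ b) (k : ℕ) (c : ℕ → E) (hc : ∀ m, 0 ≤ c m)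
    (h : ∀ m, b ⊓ c m = 0) : b ⊓ (∑ m ∈ Finset.range k, c m) = 0 := by
  induction k with
  | zero => simpa using inf_eq_right.2 hb
  | succ k ih =>
    refine le_antisymm ?_ (le_inf hb (Finset.sum_nonneg fun m _ => hc m))
    rw [Finset.sum_range_succ]
    calc b ⊓ (∑ m ∈ Finset.range k, c m + c k)
        ≤ b ⊓ (∑ m ∈ Finset.range k, c m) + b ⊓ c k := by
          rw [inf_comm b, inf_comm b (∑ m ∈ Finset.range k, c m), inf_comm b (c k)]
          exact myInfAddLe (Finset.sum_nonneg fun m _ => hc m) (hc k) hb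
    _ = 0 := by rw [ih, h, add_zero]

lemma posPart_le_abs' (a : E) : a⁺ ≤ |a| := sup_le (le_abs_self a) (abs_nonneg a)

lemma negPart_le_abs' (a : E) : a⁻ ≤ |a| := sup_le (neg_le_abs a) (abs_nonneg a)

/-- Extend an additive bounded functional on the positive cone to a continuous linear map. -/
lemma extendPos (p : E → ℝ) (C : ℝ)
    (hadd : ∀ x y : E, 0 ≤ x → 0 ≤ y → p (x + y) = p x + p y)
    (hbd : ∀ x : E, 0 ≤ x → |p x| ≤ C * ‖x‖) :
    ∃ F : E →L[ℝ] ℝ, ∀ x : E, 0 ≤ x → F x = p x := by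
  set P : E → ℝ := fun x => p x⁺ - p x⁻ with hP
  have hPadd : ∀ x y : E, P (x + y) = P x + P y := by
    intro x y
    have key : (x + y)⁺ + (x⁻ + y⁻) = (x + y)⁻ + (x⁺ + y⁺) := by
      refine eq_of_sub_eq_zero ?_
      calc (x + y)⁺ + (x⁻ + y⁻) - ((x + y)⁻ + (x⁺ + y⁺))
          = ((x + y)⁺ - (x + y)⁻) - (x⁺ - x⁻) - (y⁺ - y⁻) := by abel
      _ = (x + y) - x - y := by
          rw [posPart_sub_negPart, posPart_sub_negPart, posPart_sub_negPart]
      _ = 0 := by abel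
    have h1 : p ((x + y)⁺ + (x⁻ + y⁻)) = p (x + y)⁺ + (p x⁻ + p y⁻) := by
      rw [hadd _ _ (posPart_nonneg _) (add_nonneg (negPart_nonneg _) (negPart_nonneg _)),
        hadd _ _ (negPart_nonneg _) (negPart_nonneg _)]
    have h2 : p ((x + y)⁻ + (x⁺ + y⁺)) = p (x + y)⁻ + (p x⁺ + p y⁺) := by
      rw [hadd _ _ (negPart_nonneg _) (add_nonneg (posPart_nonneg _) (posPart_nonneg _)),
        hadd _ _ (posPart_nonneg _) (posPart_nonneg _)]
    have h3 : p (x + y)⁺ + (p x⁻ + p y⁻) = p (x + y)⁻ + (p x⁺ + p y⁺) := by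
      rw [← h1, ← h2, key]
    simp only [hP]
    linarith
  have hPbd : ∀ z : E, |P z| ≤ (|C| + |C|) * ‖z‖ := by
    intro z
    have b1 : |p z⁺| ≤ |C| * ‖z‖ := by
      refine (hbd _ (posPart_nonneg _)).trans ?_
      have : ‖z⁺‖ ≤ ‖z‖ := norm_le_norm_of_abs_le_abs
        (by rw [abs_of_nonneg (posPart_nonneg z)]; exact posPart_le_abs' z)
      calc C * ‖z⁺‖ ≤ |C| * ‖z⁺‖ := mul_le_mul_of_nonneg_right (le_abs_self C) (norm_nonneg _)
      _ ≤ |C| * ‖z‖ := mul_le_mul_of_nonneg_left this (abs_nonneg C)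
    have b2 : |p z⁻| ≤ |C| * ‖z‖ := by
      refine (hbd _ (negPart_nonneg _)).trans ?_
      have : ‖z⁻‖ ≤ ‖z‖ := norm_le_norm_of_abs_le_abs
        (by rw [abs_of_nonneg (negPart_nonneg z)]; exact negPart_le_abs' z)
      calc C * ‖z⁻‖ ≤ |C| * ‖z⁻‖ := mul_le_mul_of_nonneg_right (le_abs_self C) (norm_nonneg _)
      _ ≤ |C| * ‖z‖ := mul_le_mul_of_nonneg_left this (abs_nonneg C)
    calc |P z| ≤ |p z⁺| + |p z⁻| := abs_sub _ _
    _ ≤ |C| * ‖z‖ + |C| * ‖z‖ := add_le_add b1 b2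
    _ = (|C| + |C|) * ‖z‖ := by ring
  have hPcont : Continuous P := by
    have hlip : LipschitzWith (Real.toNNReal (|C| + |C|)) P := by
      refine LipschitzWith.of_dist_le_mul fun a b => ?_
      have hab : P a - P b = P (a - b) := by
        have := hPadd (a - b) b; rw [sub_add_cancel] at this; linarith
      rw [Real.dist_eq, dist_eq_norm, hab]
      calc |P (a - b)| ≤ (|C| + |C|) * ‖a - b‖ := hPbd _
      _ = (Real.toNNReal (|C| + |C|) : ℝ) * ‖a - b‖ := by
          rw [Real.coe_toNNReal _ (by positivity)]
    exact hlip.continuous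
  refine ⟨AddMonoidHom.toRealLinearMap (AddMonoidHom.mk' P hPadd) hPcont, fun x hx => ?_⟩
  have h0 : p 0 = 0 := by have := hadd 0 0 le_rfl le_rfl; simp at this; linarith
  have : P x = p x := by
    simp only [hP, posPart_eq_self.2 hx, negPart_eq_zero.2 hx, h0, sub_zero]
  simpa [AddMonoidHom.toRealLinearMap] using this

end Aux

section Main

variable {E : Type*} [NormedAddCommGroup E] [Lattice E] [HasSolidNorm E] [IsOrderedAddMonoid E] [NormedSpace ℝ E]

/-- The positive part of a continuous linear functional on a Banach lattice. -/
lemma exists_posPartFunctional (f : E →L[ℝ] ℝ) :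
    ∃ g : E →L[ℝ] ℝ, (∀ x : E, 0 ≤ x → 0 ≤ g x) ∧ (∀ x : E, 0 ≤ x → f x ≤ g x) := by
  set p : E → ℝ := fun x => sSup (f '' {y : E | 0 ≤ y ∧ y ≤ x}) with hp
  have hmem0 : ∀ x : E, 0 ≤ x → (0 : ℝ) ∈ f '' {y : E | 0 ≤ y ∧ y ≤ x} :=
    fun x hx => ⟨0, ⟨le_rfl, hx⟩, by simp⟩
  have hne : ∀ x : E, 0 ≤ x → (f '' {y : E | 0 ≤ y ∧ y ≤ x}).Nonempty :=
    fun x hx => ⟨0, hmem0 x hx⟩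
  have hub : ∀ x : E, 0 ≤ x → ∀ r ∈ f '' {y : E | 0 ≤ y ∧ y ≤ x}, r ≤ ‖f‖ * ‖x‖ := by
    rintro x hx r ⟨y, ⟨hy0, hyx⟩, rfl⟩
    have hny : ‖y‖ ≤ ‖x‖ := norm_le_norm_of_abs_le_abs
      (by rw [abs_of_nonneg hy0, abs_of_nonneg hx]; exact hyx)
    calc f y ≤ |f y| := le_abs_self _
    _ ≤ ‖f‖ * ‖y‖ := f.le_opNorm y
    _ ≤ ‖f‖ * ‖x‖ := mul_le_mul_of_nonneg_left hny (norm_nonneg f)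
  have hbdd : ∀ x : E, 0 ≤ x → BddAbove (f '' {y : E | 0 ≤ y ∧ y ≤ x}) :=
    fun x hx => ⟨‖f‖ * ‖x‖, fun r hr => hub x hx r hr⟩
  have hnn : ∀ x : E, 0 ≤ x → 0 ≤ p x := fun x hx => le_csSup (hbdd x hx) (hmem0 x hx)
  have hfle : ∀ x : E, 0 ≤ x → f x ≤ p x :=
    fun x hx => le_csSup (hbdd x hx) ⟨x, ⟨hx, le_rfl⟩, rfl⟩
  have hple : ∀ x : E, 0 ≤ x → p x ≤ ‖f‖ * ‖x‖ :=
    fun x hx => csSup_le (hne x hx) (hub x hx)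
  have hadd : ∀ x y : E, 0 ≤ x → 0 ≤ y → p (x + y) = p x + p y := by
    intro x y hx hy
    refine le_antisymm ?_ ?_
    · refine csSup_le (hne _ (add_nonneg hx hy)) ?_
      rintro r ⟨z, ⟨hz0, hzxy⟩, rfl⟩
      have hz1 : z ⊓ x ∈ {y : E | 0 ≤ y ∧ y ≤ x} := ⟨le_inf hz0 hx, inf_le_right⟩
      have hz2 : z - z ⊓ x ∈ {w : E | 0 ≤ w ∧ w ≤ y} := by
        constructor
        · exact sub_nonneg.2 inf_le_left
        · have : z - z ⊓ x = (z - z) ⊔ (z - x) := by rw [sub_inf]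
          rw [this, sub_self]
          exact sup_le hy (sub_le_iff_le_add'.2 hzxy)
      have hsplit : f z = f (z ⊓ x) + f (z - z ⊓ x) := by
        rw [← map_add]; congr 1; abel
      rw [hsplit]
      exact add_le_add (le_csSup (hbdd x hx) ⟨_, hz1, rfl⟩) (le_csSup (hbdd y hy) ⟨_, hz2, rfl⟩)
    · have h1 : ∀ r ∈ f '' {y1 : E | 0 ≤ y1 ∧ y1 ≤ x}, r ≤ p (x + y) - p y := by
        rintro r ⟨z1, ⟨hz10, hz1x⟩, rfl⟩
        have h2 : ∀ s ∈ f '' {y2 : E | 0 ≤ y2 ∧ y2 ≤ y}, s ≤ p (x + y) - f z1 := by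
          rintro s ⟨z2, ⟨hz20, hz2y⟩, rfl⟩
          have h3 : f z1 + f z2 ≤ p (x + y) := by
            rw [← map_add]
            exact le_csSup (hbdd _ (add_nonneg hx hy))
              ⟨z1 + z2, ⟨add_nonneg hz10 hz20, add_le_add hz1x hz2y⟩, rfl⟩
          linarith
        have h4 : p y ≤ p (x + y) - f z1 := csSup_le (hne y hy) h2
        linarith
      have h5 : p x ≤ p (x + y) - p y := csSup_le (hne x hx) h1
      linarith
  obtain ⟨F, hF⟩ := extendPos p (‖f‖) hadd (fun x hx => by
    rw [abs_of_nonneg (hnn x hx)]; exact hple x hx)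
  exact ⟨F, fun x hx => (hF x hx) ▸ hnn x hx, fun x hx => (hF x hx) ▸ hfle x hx⟩

/-- Given a positive functional `f` and a disjoint sequence `u` of positive elements, produce a
functional agreeing with `f` on each `u n` and vanishing on everything disjoint from all `u n`. -/
lemma exists_bandFunctional (f : E →L[ℝ] ℝ) (hf : ∀ v : E, 0 ≤ v → 0 ≤ f v)
    (u : ℕ → E) (hu : ∀ n, 0 ≤ u n) (_hd : ∀ m n, m ≠ n → u m ⊓ u n = 0) :
    ∃ F : E →L[ℝ] ℝ, (∀ n, F (u n) = f (u n)) ∧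
      (∀ w : E, 0 ≤ w → (∀ m, w ⊓ u m = 0) → F w = 0) := by
  have fmono : ∀ a b : E, a ≤ b → f a ≤ f b := by
    intro a b hab
    have := hf (b - a) (sub_nonneg.2 hab)
    rw [map_sub] at this; linarith
  set S : ℕ → E := fun k => ∑ m ∈ Finset.range k, u m with hS
  have hS0 : ∀ k, 0 ≤ S k := fun k => Finset.sum_nonneg fun m _ => hu m
  set T : ℕ → E := fun k => k • S k with hT
  have hT0 : ∀ k, 0 ≤ T k := fun k => nsmul_nonneg (hS0 k) k
  have hSmono : Monotone S := by
    intro a b hab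
    exact Finset.sum_le_sum_of_subset_of_nonneg (Finset.range_subset_range.2 hab)
      (fun m _ _ => hu m)
  have hTmono : Monotone T := by
    intro a b hab
    calc a • S a ≤ a • S b := nsmul_le_nsmul_right (hSmono hab) a
    _ ≤ b • S b := nsmul_le_nsmul_left (hS0 b) hab
  set p : E → ℝ := fun z => ⨆ k : ℕ, f (z ⊓ T k) with hp
  have hamono : ∀ z : E, 0 ≤ z → Monotone fun k => f (z ⊓ T k) := by
    intro z hz a b hab
    exact fmono _ _ (inf_le_inf_left z (hTmono hab))
  have haub : ∀ z : E, 0 ≤ z → ∀ k, f (z ⊓ T k) ≤ f z :=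
    fun z hz k => fmono _ _ inf_le_left
  have hann : ∀ z : E, 0 ≤ z → ∀ k, 0 ≤ f (z ⊓ T k) :=
    fun z hz k => hf _ (le_inf hz (hT0 k))
  have hbdd : ∀ z : E, 0 ≤ z → BddAbove (Set.range fun k => f (z ⊓ T k)) := by
    rintro z hz
    exact ⟨f z, by rintro r ⟨k, rfl⟩; exact haub z hz k⟩
  have htend : ∀ z : E, 0 ≤ z →
      Tendsto (fun k => f (z ⊓ T k)) atTop (𝓝 (p z)) :=
    fun z hz => tendsto_atTop_ciSup (hamono z hz) (hbdd z hz)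
  have hple : ∀ z : E, 0 ≤ z → p z ≤ f z := fun z hz => ciSup_le (haub z hz)
  have hnn : ∀ z : E, 0 ≤ z → 0 ≤ p z :=
    fun z hz => (hann z hz 0).trans (le_ciSup (hbdd z hz) 0)
  have hadd : ∀ y z : E, 0 ≤ y → 0 ≤ z → p (y + z) = p y + p z := by
    intro y z hy hz
    refine le_antisymm ?_ ?_
    · refine ciSup_le fun k => ?_
      have h1 : (y + z) ⊓ T k ≤ y ⊓ T k + z ⊓ T k := myInfAddLe hy hz (hT0 k)
      calc f ((y + z) ⊓ T k) ≤ f (y ⊓ T k + z ⊓ T k) := fmono _ _ h1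
      _ = f (y ⊓ T k) + f (z ⊓ T k) := map_add f _ _
      _ ≤ p y + p z := add_le_add (le_ciSup (hbdd y hy) k) (le_ciSup (hbdd z hz) k)
    · have key : ∀ k : ℕ, f (y ⊓ T k) + f (z ⊓ T k) ≤ p (y + z) := by
        intro k
        have hTT : T k + T k ≤ T (2 * k) := by
          have h1 : (2 * k) • S k ≤ (2 * k) • S (2 * k) :=
            nsmul_le_nsmul_right (hSmono (by omega)) _
          have h2 : T k + T k = (2 * k) • S k := by
            rw [hT]; rw [← add_nsmul]; ring_nf
          rw [h2]; exact h1
        have hle : y ⊓ T k + z ⊓ T k ≤ (y + z) ⊓ T (2 * k) := by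
          refine le_inf (add_le_add inf_le_left inf_le_left) ?_
          exact (add_le_add inf_le_right inf_le_right).trans hTT
        calc f (y ⊓ T k) + f (z ⊓ T k) = f (y ⊓ T k + z ⊓ T k) := (map_add f _ _).symm
        _ ≤ f ((y + z) ⊓ T (2 * k)) := fmono _ _ hle
        _ ≤ p (y + z) := le_ciSup (hbdd _ (add_nonneg hy hz)) (2 * k)
      have hlim : Tendsto (fun k => f (y ⊓ T k) + f (z ⊓ T k)) atTop (𝓝 (p y + p z)) :=
        (htend y hy).add (htend z hz)
      exact le_of_tendsto' hlim key
  obtain ⟨F, hF⟩ := extendPos p (‖f‖) hadd (fun z hz => by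
    rw [abs_of_nonneg (hnn z hz)]
    exact (hple z hz).trans ((le_abs_self _).trans (f.le_opNorm z)))
  refine ⟨F, fun n => ?_, fun w hw hwu => ?_⟩
  · rw [hF _ (hu n)]
    refine le_antisymm (hple _ (hu n)) ?_
    have heq : u n ⊓ T (n + 1) = u n := by
      refine inf_eq_left.2 ?_
      have h1 : u n ≤ S (n + 1) :=
        Finset.single_le_sum (fun m _ => hu m) (Finset.self_mem_range_succ n)
      have h2 : S (n + 1) = 1 • S (n + 1) := (one_nsmul _).symm
      calc u n ≤ S (n + 1) := h1
      _ = 1 • S (n + 1) := h2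
      _ ≤ (n + 1) • S (n + 1) := nsmul_le_nsmul_left (hS0 _) (by omega)
    calc f (u n) = f (u n ⊓ T (n + 1)) := by rw [heq]
    _ ≤ p (u n) := le_ciSup (hbdd _ (hu n)) (n + 1)
  · rw [hF _ hw]
    have hzero : ∀ k : ℕ, f (w ⊓ T k) = 0 := by
      intro k
      have : w ⊓ T k = 0 := by
        have hTsum : T k = ∑ m ∈ Finset.range k, k • u m := by
          show k • ∑ m ∈ Finset.range k, u m = _
          rw [Finset.smul_sum]
        rw [hTsum]
        exact myDisjSum hw k (fun m => k • u m) (fun m => nsmul_nonneg (hu m) k)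
          (fun m => myDisjSmul hw (hu m) (hwu m) k)
      rw [this, map_zero]
    simp only [hp, hzero, ciSup_const]

end Main

/-- A pairwise disjoint sequence in a Banach lattice is absolutely weakly null iff it is
weakly null. -/
theorem disjoint_absWeakNull_iff_weakNull {E : Type*} [NormedAddCommGroup E] [Lattice E] [HasSolidNorm E] [IsOrderedAddMonoid E] [NormedSpace ℝ E] [PosSMulStrictMono ℝ E] [PosSMulReflectLT ℝ E] [CompleteSpace E]
    (x : ℕ → E) (hdisj : ∀ m n, m ≠ n → |x m| ⊓ |x n| = 0) :
    Tendsto x atTop (@nhds E (absWeakTopology E) 0) ↔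
      ∀ f : E →L[ℝ] ℝ, Tendsto (fun n => f (x n)) atTop (𝓝 0) := by
  have habs : Tendsto x atTop (@nhds E (absWeakTopology E) 0) ↔
      ∀ f : {f : E →L[ℝ] ℝ // ∀ v : E, 0 ≤ v → 0 ≤ f v},
        Tendsto (fun n => f.1 |x n|) atTop (𝓝 0) := by
    rw [absWeakTopology, _root_.nhds_iInf, tendsto_iInf]
    refine forall_congr' fun f => ?_
    refine (@tendsto_iff_dist_tendsto_zero E ℕ (absSeminormDist f.1 f.2) x atTop 0).trans ?_
    have hdist : (fun n => @dist E (absSeminormDist f.1 f.2).toDist (x n) 0)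
        = fun n => f.1 |x n| := by
      funext n
      show f.1 |x n - 0| = f.1 |x n|
      rw [sub_zero]
    rw [hdist]
  rw [habs]
  constructor
  · intro hA f
    have key : ∀ (φ : E →L[ℝ] ℝ), (∀ v : E, 0 ≤ v → 0 ≤ φ v) →
        Tendsto (fun n => φ (x n)) atTop (𝓝 0) := by
      intro φ hφ
      refine squeeze_zero_norm (fun n => ?_) (hA ⟨φ, hφ⟩)
      rw [Real.norm_eq_abs, abs_le]
      constructor
      · have h := hφ (|x n| + x n)
          ((sub_neg_eq_add (|x n|) (x n)) ▸ sub_nonneg.2 (neg_le_abs (x n)))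
        rw [map_add] at h; linarith
      · have h := hφ (|x n| - x n) (sub_nonneg.2 (le_abs_self _))
        rw [map_sub] at h; linarith
    obtain ⟨g, hg0, hgf⟩ := exists_posPartFunctional f
    have hgf0 : ∀ v : E, 0 ≤ v → 0 ≤ (g - f) v := by
      intro v hv
      rw [ContinuousLinearMap.sub_apply, sub_nonneg]
      exact hgf v hv
    have h1 := key g hg0
    have h2 := key (g - f) hgf0
    have h3 : Tendsto (fun n => g (x n) - (g - f) (x n)) atTop (𝓝 (0 - 0)) := h1.sub h2
    simp only [ContinuousLinearMap.sub_apply, sub_zero, sub_sub_cancel] at h3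
    exact h3
  · intro hB f
    have hup : ∀ n : ℕ, (0 : E) ≤ (x n)⁺ := fun n => posPart_nonneg _
    have hun : ∀ n : ℕ, (0 : E) ≤ (x n)⁻ := fun n => negPart_nonneg _
    have hdp : ∀ m n, m ≠ n → (x m)⁺ ⊓ (x n)⁺ = 0 := by
      intro m n hmn
      refine le_antisymm ?_ (le_inf (hup m) (hup n))
      calc (x m)⁺ ⊓ (x n)⁺ ≤ |x m| ⊓ |x n| :=
        inf_le_inf (posPart_le_abs' _) (posPart_le_abs' _)
      _ = 0 := hdisj m n hmn
    have hdn : ∀ m n, m ≠ n → (x m)⁻ ⊓ (x n)⁻ = 0 := by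
      intro m n hmn
      refine le_antisymm ?_ (le_inf (hun m) (hun n))
      calc (x m)⁻ ⊓ (x n)⁻ ≤ |x m| ⊓ |x n| :=
        inf_le_inf (negPart_le_abs' _) (negPart_le_abs' _)
      _ = 0 := hdisj m n hmn
    obtain ⟨Fp, hFp1, hFp0⟩ := exists_bandFunctional f.1 f.2 (fun n => (x n)⁺) hup hdp
    obtain ⟨Fm, hFm1, hFm0⟩ := exists_bandFunctional f.1 f.2 (fun n => (x n)⁻) hun hdn
    have hnp : ∀ n m : ℕ, (x n)⁻ ⊓ (x m)⁺ = 0 := by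
      intro n m
      rcases eq_or_ne n m with rfl | hnm
      · rw [inf_comm]; exact posPart_inf_negPart_eq_zero (x n)
      · refine le_antisymm ?_ (le_inf (hun n) (hup m))
        calc (x n)⁻ ⊓ (x m)⁺ ≤ |x n| ⊓ |x m| :=
          inf_le_inf (negPart_le_abs' _) (posPart_le_abs' _)
        _ = 0 := hdisj n m hnm
    have hpn : ∀ n m : ℕ, (x n)⁺ ⊓ (x m)⁻ = 0 := by
      intro n m
      rcases eq_or_ne n m with rfl | hnm
      · exact posPart_inf_negPart_eq_zero (x n)
      · refine le_antisymm ?_ (le_inf (hup n) (hun m))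
        calc (x n)⁺ ⊓ (x m)⁻ ≤ |x n| ⊓ |x m| :=
          inf_le_inf (posPart_le_abs' _) (negPart_le_abs' _)
        _ = 0 := hdisj n m hnm
    have heval : ∀ n, (Fp - Fm) (x n) = f.1 |x n| := by
      intro n
      have e1 : Fp (x n) = f.1 ((x n)⁺) := by
        conv_lhs => rw [← posPart_sub_negPart (x n)]
        rw [map_sub, hFp1 n, hFp0 _ (hun n) (hnp n), sub_zero]
      have e2 : Fm (x n) = -f.1 ((x n)⁻) := by
        conv_lhs => rw [← posPart_sub_negPart (x n)]
        rw [map_sub, hFm1 n, hFm0 _ (hup n) (hpn n), zero_sub]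
      rw [ContinuousLinearMap.sub_apply, e1, e2, sub_neg_eq_add, ← map_add,
        posPart_add_negPart]
    have := hB (Fp - Fm)
    simpa only [heval] using this
end

section
/- If the closed unit ball of the dual E* of a Banach lattice E is compact in the absolute weak* topology |σ|(E*,E), then the norm of E is order continuous. -/
set_option linter.unusedSectionVars false

open Filter Topology Pointwise MeasureTheory


section DualDefs

variable {E : Type*} [NormedAddCommGroup E] [Lattice E] [HasSolidNorm E] [IsOrderedAddMonoid E] [NormedSpace ℝ E]

/-- For a continuous linear functional `f` on a Banach lattice `E` and `z ∈ E`, the value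
`|f|(z) = sup { f y : |y| ≤ z }` (meaningful for `z ≥ 0`), by the Riesz–Kantorovich formula. -/
noncomputable def dualAbsVal (f : E →L[ℝ] ℝ) (z : E) : ℝ :=
  sSup ((fun y => f y) '' {y : E | |y| ≤ z})

lemma absBall_nonempty (x : E) : ({y : E | |y| ≤ |x|}).Nonempty := ⟨0, by simp⟩

lemma absBall_norm_le {x y : E} (hy : y ∈ {y : E | |y| ≤ |x|}) : ‖y‖ ≤ ‖x‖ := by
  have h : |y| ≤ |x| := hy
  simpa using norm_le_norm_of_abs_le_abs (by simpa using h)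

/-- The pseudometric on the dual `E*` of a Banach lattice `E` induced by `x ∈ E`, given by
`dist f g = |f - g|(|x|) = sup { (f - g)(y) : |y| ≤ |x| }` (Riesz–Kantorovich formula). -/
noncomputable def dualAbsDist (x : E) : PseudoMetricSpace (E →L[ℝ] ℝ) where
  dist f g := sSup ((fun y => f y - g y) '' {y : E | |y| ≤ |x|})
  dist_self f := by
    show sSup ((fun y => f y - f y) '' {y : E | |y| ≤ |x|}) = 0
    have h : ((fun y => f y - f y) '' {y : E | |y| ≤ |x|}) = {0} := by
      simp only [sub_self]
      exact Set.Nonempty.image_const (absBall_nonempty x) 0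
    rw [h, csSup_singleton]
  dist_comm f g := by
    try dsimp only
    congr 1
    ext r
    constructor
    · rintro ⟨y, hy, rfl⟩
      exact ⟨-y, by simpa using hy, by show g (-y) - f (-y) = _; rw [map_neg, map_neg]; ring⟩
    · rintro ⟨y, hy, rfl⟩
      exact ⟨-y, by simpa using hy, by show f (-y) - g (-y) = _; rw [map_neg, map_neg]; ring⟩
  dist_triangle f g h := by
    try dsimp only
    have hbdd : ∀ u v : E →L[ℝ] ℝ,
        BddAbove ((fun y => u y - v y) '' {y : E | |y| ≤ |x|}) := by
      intro u v
      refine ⟨‖u - v‖ * ‖x‖, ?_⟩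
      rintro r ⟨y, hy, rfl⟩
      calc u y - v y ≤ |u y - v y| := le_abs_self _
        _ = ‖(u - v) y‖ := by rw [ContinuousLinearMap.sub_apply, Real.norm_eq_abs]
        _ ≤ ‖u - v‖ * ‖y‖ := (u - v).le_opNorm y
        _ ≤ ‖u - v‖ * ‖x‖ := by
            have := absBall_norm_le (x := x) hy
            gcongr
    refine csSup_le ((absBall_nonempty x).image _) ?_
    rintro r ⟨y, hy, rfl⟩
    have h1 : f y - g y ≤ sSup ((fun y => f y - g y) '' {y : E | |y| ≤ |x|}) :=
      le_csSup (hbdd f g) ⟨y, hy, rfl⟩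
    have h2 : g y - h y ≤ sSup ((fun y => g y - h y) '' {y : E | |y| ≤ |x|}) :=
      le_csSup (hbdd g h) ⟨y, hy, rfl⟩
    show f y - h y ≤ _
    linarith

/-- The absolute weak* topology `|σ|(E*, E)` on the dual of a Banach lattice `E`: the topology
generated by the lattice seminorms `x* ↦ |x*|(|x|)`, `x ∈ E`. -/
noncomputable def absWeakStarTopology (E : Type*) [NormedAddCommGroup E] [Lattice E] [HasSolidNorm E] [IsOrderedAddMonoid E]
    [NormedSpace ℝ E] : TopologicalSpace (E →L[ℝ] ℝ) :=
  ⨅ x : E, (dualAbsDist x).toUniformSpace.toTopologicalSpace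

end DualDefs

section AuxProof

variable {E : Type*} [NormedAddCommGroup E] [Lattice E] [HasSolidNorm E] [IsOrderedAddMonoid E] [NormedSpace ℝ E]

lemma absWS_bddAbove (u : E) (g h : E →L[ℝ] ℝ) :
    BddAbove ((fun y => g y - h y) '' {y : E | |y| ≤ |u|}) := by
  refine ⟨‖g - h‖ * ‖u‖, ?_⟩
  rintro r ⟨y, hy, rfl⟩
  calc g y - h y ≤ |g y - h y| := le_abs_self _
    _ = ‖(g - h) y‖ := by rw [ContinuousLinearMap.sub_apply, Real.norm_eq_abs]
    _ ≤ ‖g - h‖ * ‖y‖ := (g - h).le_opNorm y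
    _ ≤ ‖g - h‖ * ‖u‖ := by
        have := absBall_norm_le (x := u) hy
        gcongr

lemma absWS_machine
    (hB : @IsCompact (E →L[ℝ] ℝ) (absWeakStarTopology E) {f : E →L[ℝ] ℝ | ‖f‖ ≤ 1})
    (u : E) (z : ℕ → E) (δ₀ : ℝ) (hδ : 0 < δ₀)
    (hz0 : ∀ n, 0 ≤ z n) (hsum : ∀ F : Finset ℕ, ∑ n ∈ F, z n ≤ u)
    (hznorm : ∀ n, δ₀ < ‖z n‖) : False := by
  classical
  have hu : 0 ≤ u := by simpa using hsum ∅
  have hzu : ∀ n, z n ≤ u := fun n => by simpa using hsum {n}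
  have hzne : ∀ n, z n ≠ 0 := by
    intro n hn
    have := hznorm n
    rw [hn, norm_zero] at this
    linarith
  choose ψf hψ1 hψ2 using fun n => exists_dual_vector ℝ (z n) (norm_ne_zero_iff.mpr (hzne n))
  set S : Filter (E →L[ℝ] ℝ) := Filter.map ψf Filter.atTop with hSdef
  haveI : S.NeBot := Filter.map_neBot
  have hSle : S ≤ Filter.principal {f : E →L[ℝ] ℝ | ‖f‖ ≤ 1} := by
    rw [Filter.le_principal_iff, Filter.mem_map]
    exact Filter.Eventually.of_forall fun n => le_of_eq (hψ1 n)
  obtain ⟨ψ, hψball, hcl⟩ := hB hSle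
  -- pass to the pseudometric topology at u
  have hne : Filter.NeBot
      ((@nhds _ ((dualAbsDist u).toUniformSpace.toTopologicalSpace) ψ) ⊓ S) := by
    have h1 : Filter.NeBot ((@nhds _ (absWeakStarTopology E) ψ) ⊓ S) := hcl
    refine h1.mono (inf_le_inf_right S ?_)
    have hTopEq : absWeakStarTopology E
        = ⨅ x : E, (dualAbsDist x).toUniformSpace.toTopologicalSpace := rfl
    rw [hTopEq, _root_.nhds_iInf]
    exact iInf_le _ u
  -- frequent closeness
  have hfreq : ∀ n₀ : ℕ, ∃ n, n₀ ≤ n ∧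
      sSup ((fun y => ψf n y - ψ y) '' {y : E | |y| ≤ |u|}) < δ₀ / 2 := by
    intro n₀
    letI := dualAbsDist u
    have hball : Metric.ball ψ (δ₀ / 2) ∈
        @nhds _ ((dualAbsDist u).toUniformSpace.toTopologicalSpace) ψ :=
      Metric.ball_mem_nhds _ (by positivity)
    have hB' : ψf '' Set.Ici n₀ ∈ S := Filter.image_mem_map (Filter.Ici_mem_atTop n₀)
    obtain ⟨g, hg1, hg2⟩ := (Filter.inf_neBot_iff.mp hne) hball hB'
    obtain ⟨n, hn, rfl⟩ := hg2
    refine ⟨n, hn, ?_⟩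
    have : dist (ψf n) ψ < δ₀ / 2 := Metric.mem_ball.mp hg1
    exact this
  have key : ∀ n₀ : ℕ, ∃ n, n₀ ≤ n ∧ δ₀ / 2 < ψ (z n) := by
    intro n₀
    obtain ⟨n, hn, hlt⟩ := hfreq n₀
    refine ⟨n, hn, ?_⟩
    have hmem : z n ∈ {y : E | |y| ≤ |u|} := by
      simp only [Set.mem_setOf_eq, abs_of_nonneg (hz0 n), abs_of_nonneg hu]
      exact hzu n
    have hle : ψf n (z n) - ψ (z n) ≤
        sSup ((fun y => ψf n y - ψ y) '' {y : E | |y| ≤ |u|}) :=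
      le_csSup (absWS_bddAbove u _ _) ⟨z n, hmem, rfl⟩
    have heq : ψf n (z n) = ‖z n‖ := by simpa using hψ2 n
    have := hznorm n
    linarith
  choose nf hnf1 hnf2 using key
  let m : ℕ → ℕ := fun k => Nat.rec (nf 0) (fun _ p => nf (p + 1)) k
  have hmlt : ∀ k, m k < m (k + 1) := by
    intro k
    have : m k + 1 ≤ nf (m k + 1) := hnf1 _
    simpa [m] using this
  have hminj : Function.Injective m := (strictMono_nat_of_lt_succ hmlt).injective
  have hmval : ∀ k, δ₀ / 2 < ψ (z (m k)) := by
    intro k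
    cases k with
    | zero => exact hnf2 0
    | succ k => exact hnf2 (m k + 1)
  obtain ⟨K, hK⟩ := exists_nat_gt (2 * ‖u‖ / δ₀)
  have hK0 : 0 < K := by
    have h : (0:ℝ) < (K:ℝ) := lt_of_le_of_lt (by positivity) hK
    exact_mod_cast h
  set F : Finset ℕ := (Finset.range K).image m with hFdef
  have hFne : F.Nonempty := by
    refine ⟨m 0, Finset.mem_image.mpr ⟨0, Finset.mem_range.mpr hK0, rfl⟩⟩
  set v : E := ∑ n ∈ F, z n with hvdef
  have hv1 : ψ v = ∑ n ∈ F, ψ (z n) := by simp [hvdef, map_sum]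
  have hv2 : (K : ℝ) * (δ₀ / 2) < ∑ n ∈ F, ψ (z n) := by
    have hsum_im : ∑ n ∈ F, ψ (z n) = ∑ k ∈ Finset.range K, ψ (z (m k)) :=
      Finset.sum_image (fun a _ b _ hab => hminj hab)
    rw [hsum_im]
    have : ∑ _k ∈ Finset.range K, (δ₀ / 2) < ∑ k ∈ Finset.range K, ψ (z (m k)) :=
      Finset.sum_lt_sum_of_nonempty (Finset.nonempty_range_iff.mpr hK0.ne') fun i _ => hmval i
    simpa [Finset.sum_const, Finset.card_range, nsmul_eq_mul] using this
  have hψnorm : ‖ψ‖ ≤ 1 := hψball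
  have hv0 : 0 ≤ v := Finset.sum_nonneg fun n _ => hz0 n
  have hvu : v ≤ u := hsum F
  have hvnorm : ‖v‖ ≤ ‖u‖ :=
    norm_le_norm_of_abs_le_abs (by rwa [abs_of_nonneg hv0, abs_of_nonneg hu])
  have hψv : ψ v ≤ ‖u‖ := by
    calc ψ v ≤ |ψ v| := le_abs_self _
      _ = ‖ψ v‖ := (Real.norm_eq_abs _).symm
      _ ≤ ‖ψ‖ * ‖v‖ := ψ.le_opNorm v
      _ ≤ 1 * ‖u‖ := by gcongr
      _ = ‖u‖ := one_mul _
  have hKbig : ‖u‖ < (K : ℝ) * (δ₀ / 2) := by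
    rw [div_lt_iff₀ hδ] at hK
    linarith
  linarith [hv1 ▸ hv2, hψv]

end AuxProof

section AuxProof2

variable {E : Type*} [NormedAddCommGroup E] [Lattice E] [HasSolidNorm E] [IsOrderedAddMonoid E] [NormedSpace ℝ E]

lemma absWS_cauchy
    (hB : @IsCompact (E →L[ℝ] ℝ) (absWeakStarTopology E) {f : E →L[ℝ] ℝ | ‖f‖ ≤ 1})
    {ι : Type*} [Preorder ι] [Nonempty ι] (d : ι → E)
    (hd : Antitone d) (h0 : ∀ i, 0 ≤ d i) :
    ∀ δ : ℝ, 0 < δ → ∃ i, ∀ j, i ≤ j → ‖d i - d j‖ ≤ δ := by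
  classical
  by_contra hcon
  push_neg at hcon
  obtain ⟨δ₀, hδ₀, hnc⟩ := hcon
  choose nxt h1 h2 using hnc
  let α : ℕ → ι := fun n => Nat.rec (Classical.arbitrary ι) (fun _ p => nxt p) n
  have hα : ∀ n, α n ≤ α (n + 1) := fun n => h1 (α n)
  have hαmono : Monotone α := monotone_nat_of_le_succ hα
  refine absWS_machine hB (d (α 0)) (fun n => d (α n) - d (α (n + 1))) δ₀ hδ₀ ?_ ?_ ?_
  · intro n
    exact sub_nonneg.mpr (hd (hα n))
  · intro F
    obtain ⟨N, hFN⟩ := F.exists_nat_subset_range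
    calc ∑ n ∈ F, (d (α n) - d (α (n + 1)))
        ≤ ∑ n ∈ Finset.range N, (d (α n) - d (α (n + 1))) :=
          Finset.sum_le_sum_of_subset_of_nonneg hFN
            (fun n _ _ => sub_nonneg.mpr (hd (hα n)))
      _ = d (α 0) - d (α N) := Finset.sum_range_sub' (fun n => d (α n)) N
      _ ≤ d (α 0) := sub_le_self _ (h0 _)
  · intro n
    exact h2 (α n)

end AuxProof2


/-- If the closed unit ball of the dual of a Banach lattice `E` is compact in the absolute
weak* topology, then the norm of `E` is order continuous: every decreasing net with infimum `0`
converges to `0` in norm. -/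
theorem orderContinuous_of_absWeakStar_compact_ball {E : Type*} [NormedAddCommGroup E] [Lattice E] [HasSolidNorm E] [IsOrderedAddMonoid E] [NormedSpace ℝ E] [PosSMulStrictMono ℝ E] [CompleteSpace E]
    (hB : @IsCompact (E →L[ℝ] ℝ) (absWeakStarTopology E) {f : E →L[ℝ] ℝ | ‖f‖ ≤ 1}) :
    ∀ (ι : Type*) (_ : Preorder ι) (_ : Nonempty ι) (_ : IsDirected ι (· ≤ ·)) (d : ι → E),
      Antitone d → IsGLB (Set.range d) 0 → Tendsto (fun i => ‖d i‖) atTop (𝓝 0) := by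
  classical
  intro ι hpre hne hdir d hd hglb
  letI := hpre
  haveI := hne
  haveI := hdir
  have h0 : ∀ i, 0 ≤ d i := fun i => hglb.1 ⟨i, rfl⟩
  have hC : ∀ δ : ℝ, 0 < δ → ∃ i, ∀ j, i ≤ j → ‖d i - d j‖ ≤ δ :=
    absWS_cauchy hB d hd h0
  have hC' : ∀ n : ℕ, ∃ i, ∀ j, i ≤ j → ‖d i - d j‖ ≤ 1 / ((n : ℝ) + 1) :=
    fun n => hC _ (by positivity)
  choose c hc using hC'
  choose sup2 hsup1 hsup2 using fun a b : ι => directed_of (· ≤ ·) a b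
  let β : ℕ → ι := fun n => Nat.rec (c 0) (fun n p => sup2 p (c (n + 1))) n
  have hβsucc : ∀ n, β n ≤ β (n + 1) := fun n => hsup1 _ _
  have hβmono : Monotone β := monotone_nat_of_le_succ hβsucc
  have hβc : ∀ n, c n ≤ β n := by
    intro n
    cases n with
    | zero => exact le_rfl
    | succ n => exact hsup2 _ _
  have hkey : ∀ (N : ℕ) (j : ι), c N ≤ j → ∀ j' : ι, c N ≤ j' →
      ‖d j - d j'‖ ≤ 1 / ((N : ℝ) + 1) + 1 / ((N : ℝ) + 1) := by
    intro N j hj j' hj'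
    have e1 := hc N j hj
    have e2 := hc N j' hj'
    have hre : d j - d j' = -(d (c N) - d j) + (d (c N) - d j') := by abel
    rw [hre]
    refine (norm_add_le _ _).trans ?_
    rw [norm_neg]
    exact add_le_add e1 e2
  have hcauchy : CauchySeq (fun n => d (β n)) := by
    rw [Metric.cauchySeq_iff']
    intro ε hε
    obtain ⟨N, hN⟩ := exists_nat_one_div_lt (half_pos hε)
    refine ⟨N, fun n hn => ?_⟩
    rw [dist_eq_norm]
    have h1 : c N ≤ β n := (hβc N).trans (hβmono hn)
    have h2 : c N ≤ β N := hβc N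
    have := hkey N (β n) h1 (β N) h2
    linarith
  obtain ⟨L, hL⟩ := cauchySeq_tendsto_of_complete hcauchy
  have hLpos : (0 : E) ≤ L := ge_of_tendsto' hL fun n => h0 _
  have hlow : L ∈ lowerBounds (Set.range d) := by
    rintro x ⟨j, rfl⟩
    have hkβ : ∀ n : ℕ, β n ≤ sup2 (β n) j := fun n => hsup1 _ _
    have hkj : ∀ n : ℕ, j ≤ sup2 (β n) j := fun n => hsup2 _ _
    have hdist : ∀ n : ℕ, dist (d (β n)) (d (sup2 (β n) j)) ≤ 2 * (1 / ((n : ℝ) + 1)) := by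
      intro n
      rw [dist_eq_norm]
      have h1 : c n ≤ β n := hβc n
      have h2 : c n ≤ sup2 (β n) j := h1.trans (hkβ n)
      have := hkey n (β n) h1 (sup2 (β n) j) h2
      linarith
    have htend0 : Tendsto (fun n : ℕ => dist (d (β n)) (d (sup2 (β n) j))) atTop (𝓝 0) := by
      refine squeeze_zero (fun n => dist_nonneg) hdist ?_
      have := tendsto_one_div_add_atTop_nhds_zero_nat.const_mul (2 : ℝ)
      simpa using this
    have hv : Tendsto (fun n : ℕ => d (sup2 (β n) j)) atTop (𝓝 L) :=
      hL.congr_dist htend0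
    exact le_of_tendsto hv (Filter.Eventually.of_forall fun n => hd (hkj n))
  have hLle : L ≤ 0 := hglb.2 hlow
  have hLeq : L = 0 := le_antisymm hLle hLpos
  have hnorm : Tendsto (fun n => ‖d (β n)‖) atTop (𝓝 0) := by
    have := hL.norm
    rw [hLeq] at this
    simpa using this
  rw [Metric.tendsto_nhds]
  intro ε hε
  obtain ⟨n, hn⟩ := (hnorm.eventually_lt_const hε).exists
  filter_upwards [Filter.Ici_mem_atTop (β n)] with j hj
  have hle : ‖d j‖ ≤ ‖d (β n)‖ := by
    refine norm_le_norm_of_abs_le_abs ?_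
    rw [abs_of_nonneg (h0 j), abs_of_nonneg (h0 (β n))]
    exact hd hj
  rw [Real.dist_eq, sub_zero, abs_of_nonneg (norm_nonneg _)]
  linarith
end

section
/- For every absolutely weakly null sequence (x_n) in a Banach lattice E, the set K = { Σ_{n} a_n x_n : Σ_n |a_n| ≤ 1 } is absolutely weakly sequentially compact, and in particular norm closed. -/
set_option linter.unusedSectionVars false

open Filter Topology Pointwise MeasureTheory


namespace AWNAux

variable {E : Type*} [NormedAddCommGroup E] [Lattice E] [HasSolidNorm E] [IsOrderedAddMonoid E] [NormedSpace ℝ E]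

/-! ### The positive part of a continuous linear functional -/

/-- `pc g x = sup { g y : 0 ≤ y ≤ x }`, for `x ≥ 0`. -/
noncomputable def pc (g : E →L[ℝ] ℝ) (x : E) : ℝ := sSup (g '' Set.Icc 0 x)

lemma mem_pc_set {g : E →L[ℝ] ℝ} {x y : E} (h0 : 0 ≤ y) (hx : y ≤ x) :
    g y ∈ g '' Set.Icc 0 x := ⟨y, ⟨h0, hx⟩, rfl⟩

lemma bound_aux {g : E →L[ℝ] ℝ} {x y : E} (h0 : 0 ≤ y) (hy : y ≤ x) :
    g y ≤ ‖g‖ * ‖x‖ := by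
  have h1 : ‖y‖ ≤ ‖x‖ := by
    refine norm_le_norm_of_abs_le_abs ?_
    rw [abs_of_nonneg h0, abs_of_nonneg (h0.trans hy)]
    exact hy
  calc g y ≤ ‖g y‖ := le_abs_self _
  _ ≤ ‖g‖ * ‖y‖ := g.le_opNorm y
  _ ≤ ‖g‖ * ‖x‖ := mul_le_mul_of_nonneg_left h1 (norm_nonneg g)

lemma pc_set_nonempty {g : E →L[ℝ] ℝ} {x : E} (hx : 0 ≤ x) :
    (g '' Set.Icc 0 x).Nonempty := ⟨g 0, mem_pc_set le_rfl hx⟩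

lemma pc_set_bdd (g : E →L[ℝ] ℝ) (x : E) : BddAbove (g '' Set.Icc 0 x) := by
  refine ⟨‖g‖ * ‖x‖, ?_⟩
  rintro _ ⟨y, ⟨h0, hy⟩, rfl⟩
  exact bound_aux h0 hy

lemma le_pc {g : E →L[ℝ] ℝ} {x y : E} (h0 : 0 ≤ y) (hyx : y ≤ x) : g y ≤ pc g x :=
  le_csSup (pc_set_bdd g x) (mem_pc_set h0 hyx)

lemma pc_nonneg (g : E →L[ℝ] ℝ) {x : E} (hx : 0 ≤ x) : 0 ≤ pc g x := by
  simpa using le_pc (g := g) le_rfl hx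

lemma pc_le (g : E →L[ℝ] ℝ) {x : E} (hx : 0 ≤ x) : pc g x ≤ ‖g‖ * ‖x‖ := by
  refine csSup_le (pc_set_nonempty hx) ?_
  rintro _ ⟨y, ⟨h0, hy⟩, rfl⟩
  exact bound_aux h0 hy

lemma pc_zero (g : E →L[ℝ] ℝ) : pc g 0 = 0 := by
  have : g '' Set.Icc (0 : E) 0 = {0} := by
    rw [Set.Icc_self, Set.image_singleton, map_zero]
  rw [pc, this, csSup_singleton]

lemma pc_add (g : E →L[ℝ] ℝ) {x y : E} (hx : 0 ≤ x) (hy : 0 ≤ y) :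
    pc g (x + y) = pc g x + pc g y := by
  apply le_antisymm
  · refine csSup_le (pc_set_nonempty (add_nonneg hx hy)) ?_
    rintro _ ⟨z, ⟨hz0, hz⟩, rfl⟩
    have h1 : 0 ≤ z ⊓ x := le_inf hz0 hx
    have h2 : z ⊓ x ≤ x := inf_le_right
    have h3 : 0 ≤ z - z ⊓ x := sub_nonneg.mpr inf_le_left
    have h4 : z - z ⊓ x ≤ y := by
      rw [sub_inf]
      refine sup_le (by simpa using hy) ?_
      rw [sub_le_iff_le_add']
      exact hz
    have hz' : z = (z ⊓ x) + (z - z ⊓ x) := by abel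
    calc g z = g ((z ⊓ x) + (z - z ⊓ x)) := by rw [← hz']
    _ = g (z ⊓ x) + g (z - z ⊓ x) := map_add g _ _
    _ ≤ pc g x + pc g y := add_le_add (le_pc h1 h2) (le_pc h3 h4)
  · have key : ∀ u : E, 0 ≤ u → u ≤ x → g u + pc g y ≤ pc g (x + y) := by
      intro u hu0 hu
      have h5 : pc g y ≤ pc g (x + y) - g u := by
        refine csSup_le (pc_set_nonempty hy) ?_
        rintro _ ⟨v, ⟨hv0, hv⟩, rfl⟩
        have h6 : g u + g v ≤ pc g (x + y) := by
          rw [← map_add]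
          exact le_pc (add_nonneg hu0 hv0) (add_le_add hu hv)
        linarith
      linarith
    have h7 : pc g x ≤ pc g (x + y) - pc g y := by
      refine csSup_le (pc_set_nonempty hx) ?_
      rintro _ ⟨u, ⟨hu0, hu⟩, rfl⟩
      linarith [key u hu0 hu]
    linarith

/-- The extension of `pc g` to all of `E`. -/
noncomputable def pm (g : E →L[ℝ] ℝ) (w : E) : ℝ := pc g (posPart w) - pc g (negPart w)

lemma pm_of_nonneg (g : E →L[ℝ] ℝ) {w : E} (hw : 0 ≤ w) : pm g w = pc g w := by
  rw [pm, posPart_eq_self.mpr hw, negPart_eq_zero.mpr hw, pc_zero, sub_zero]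

lemma pm_add (g : E →L[ℝ] ℝ) (u v : E) : pm g (u + v) = pm g u + pm g v := by
  have h1 := posPart_sub_negPart u
  have h2 := posPart_sub_negPart v
  have h3 := posPart_sub_negPart (u + v)
  have key : posPart (u + v) + (negPart u + negPart v)
      = negPart (u + v) + (posPart u + posPart v) := by
    have h5 : posPart (u + v) + (negPart u + negPart v)
        - (negPart (u + v) + (posPart u + posPart v))
        = (posPart (u + v) - negPart (u + v)) - ((posPart u - negPart u)
          + (posPart v - negPart v)) := by abel
    rw [h1, h2, h3] at h5
    have h6 : posPart (u + v) + (negPart u + negPart v)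
        - (negPart (u + v) + (posPart u + posPart v)) = 0 := by rw [h5]; abel
    exact sub_eq_zero.mp h6
  have e1 := pc_add g (posPart_nonneg (u + v))
    (add_nonneg (negPart_nonneg u) (negPart_nonneg v))
  have e2 := pc_add g (negPart_nonneg u) (negPart_nonneg v)
  have e3 := pc_add g (negPart_nonneg (u + v))
    (add_nonneg (posPart_nonneg u) (posPart_nonneg v))
  have e4 := pc_add g (posPart_nonneg u) (posPart_nonneg v)
  have h7 : pc g (posPart (u + v) + (negPart u + negPart v))
      = pc g (negPart (u + v) + (posPart u + posPart v)) := by rw [key]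
  rw [e1, e2, e3, e4] at h7
  simp only [pm]
  linarith

lemma posPart_le_abs' (w : E) : posPart w ≤ |w| := by
  rw [← posPart_add_negPart w]
  exact le_add_of_nonneg_right (negPart_nonneg w)

lemma negPart_le_abs' (w : E) : negPart w ≤ |w| := by
  rw [← posPart_add_negPart w]
  exact le_add_of_nonneg_left (posPart_nonneg w)

lemma norm_posPart_le (w : E) : ‖posPart w‖ ≤ ‖w‖ := by
  rw [← norm_abs_eq_norm w]
  refine norm_le_norm_of_abs_le_abs ?_
  rw [abs_of_nonneg (posPart_nonneg w), abs_abs]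
  exact posPart_le_abs' w

lemma norm_negPart_le (w : E) : ‖negPart w‖ ≤ ‖w‖ := by
  rw [← norm_abs_eq_norm w]
  refine norm_le_norm_of_abs_le_abs ?_
  rw [abs_of_nonneg (negPart_nonneg w), abs_abs]
  exact negPart_le_abs' w

lemma abs_pm_le (g : E →L[ℝ] ℝ) (w : E) : |pm g w| ≤ ‖g‖ * ‖w‖ := by
  have h1 : pc g (posPart w) ≤ ‖g‖ * ‖w‖ :=
    (pc_le g (posPart_nonneg w)).trans
      (mul_le_mul_of_nonneg_left (norm_posPart_le w) (norm_nonneg g))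
  have h2 : pc g (negPart w) ≤ ‖g‖ * ‖w‖ :=
    (pc_le g (negPart_nonneg w)).trans
      (mul_le_mul_of_nonneg_left (norm_negPart_le w) (norm_nonneg g))
  have h3 := pc_nonneg g (posPart_nonneg w)
  have h4 := pc_nonneg g (negPart_nonneg w)
  rw [pm, abs_le]
  constructor <;> linarith

/-- The positive part of a continuous linear functional. -/
noncomputable def pClm (g : E →L[ℝ] ℝ) : E →L[ℝ] ℝ :=
  AddMonoidHom.toRealLinearMap (AddMonoidHom.mk' (pm g) (fun u v => pm_add g u v)) <| by
    have lip : LipschitzWith ‖g‖₊ (pm g) := by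
      refine LipschitzWith.of_dist_le_mul fun u v => ?_
      have h1 : pm g u - pm g v = pm g (u - v) := by
        have := pm_add g (u - v) v
        simp only [sub_add_cancel] at this
        linarith
      rw [Real.dist_eq, h1, dist_eq_norm, coe_nnnorm]
      exact abs_pm_le g (u - v)
    exact lip.continuous

lemma pClm_apply (g : E →L[ℝ] ℝ) (w : E) : pClm g w = pm g w := rfl

lemma pClm_nonneg (g : E →L[ℝ] ℝ) : ∀ w : E, 0 ≤ w → 0 ≤ pClm g w := by
  intro w hw
  rw [pClm_apply, pm_of_nonneg g hw]
  exact pc_nonneg g hw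

lemma le_pClm (g : E →L[ℝ] ℝ) {w : E} (hw : 0 ≤ w) : g w ≤ pClm g w := by
  rw [pClm_apply, pm_of_nonneg g hw]
  exact le_pc hw le_rfl

lemma pClm_mono (g : E →L[ℝ] ℝ) {u v : E} (hu : 0 ≤ u) (huv : u ≤ v) :
    pClm g u ≤ pClm g v := by
  have h1 : 0 ≤ pClm g (v - u) := pClm_nonneg g _ (sub_nonneg.mpr huv)
  have h2 : pClm g (v - u) = pClm g v - pClm g u := map_sub _ _ _
  linarith

lemma abs_apply_le (g : E →L[ℝ] ℝ) (w : E) :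
    |g w| ≤ pClm g |w| + pClm (-g) |w| := by
  have h1 : g (posPart w) ≤ pClm g |w| :=
    (le_pClm g (posPart_nonneg w)).trans (pClm_mono g (posPart_nonneg w) (posPart_le_abs' w))
  have h2 : (-g) (negPart w) ≤ pClm (-g) |w| :=
    (le_pClm (-g) (negPart_nonneg w)).trans
      (pClm_mono (-g) (negPart_nonneg w) (negPart_le_abs' w))
  have h3 : (-g) (posPart w) ≤ pClm (-g) |w| :=
    (le_pClm (-g) (posPart_nonneg w)).trans
      (pClm_mono (-g) (posPart_nonneg w) (posPart_le_abs' w))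
  have h4 : g (negPart w) ≤ pClm g |w| :=
    (le_pClm g (negPart_nonneg w)).trans (pClm_mono g (negPart_nonneg w) (negPart_le_abs' w))
  have hd : g w = g (posPart w) - g (negPart w) := by
    rw [← map_sub, posPart_sub_negPart]
  simp only [ContinuousLinearMap.neg_apply] at h2 h3
  rw [abs_le]
  constructor <;> linarith

lemma eq_zero_of_forall_pos (w : E)
    (h : ∀ f : E →L[ℝ] ℝ, (∀ v : E, 0 ≤ v → 0 ≤ f v) → f |w| = 0) : w = 0 := by
  apply NormedSpace.eq_zero_of_forall_dual_eq_zero ℝ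
  intro g
  have h1 := abs_apply_le g w
  rw [h (pClm g) (pClm_nonneg g), h (pClm (-g)) (pClm_nonneg (-g))] at h1
  have := abs_nonneg (g w)
  have : |g w| = 0 := by linarith
  exact abs_eq_zero.mp this

end AWNAux

namespace AWNAux

variable {E : Type*} [NormedAddCommGroup E] [Lattice E] [HasSolidNorm E] [IsOrderedAddMonoid E] [NormedSpace ℝ E]

/-! ### Topology lemmas -/

lemma tendsto_absSeminormDist {f : E →L[ℝ] ℝ} {hf : ∀ v : E, 0 ≤ v → 0 ≤ f v}
    {u : ℕ → E} {y : E} :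
    Tendsto u atTop (@nhds E (absSeminormDist f hf).toUniformSpace.toTopologicalSpace y) ↔
      Tendsto (fun k => f |u k - y|) atTop (nhds 0) := by
  letI := absSeminormDist f hf
  rw [tendsto_iff_dist_tendsto_zero]
  exact Iff.rfl

lemma tendsto_absWeak_iff {u : ℕ → E} {y : E} :
    Tendsto u atTop (@nhds E (absWeakTopology E) y) ↔
      ∀ f : E →L[ℝ] ℝ, (∀ v : E, 0 ≤ v → 0 ≤ f v) →
        Tendsto (fun k => f |u k - y|) atTop (nhds 0) := by
  unfold absWeakTopology
  rw [_root_.nhds_iInf, Filter.tendsto_iInf]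
  constructor
  · intro h f hf
    exact tendsto_absSeminormDist.mp (h ⟨f, hf⟩)
  · intro h i
    exact tendsto_absSeminormDist.mpr (h i.1 i.2)

/-! ### Norm boundedness of absolutely weakly null sequences -/

lemma bounded_of_absWeakNull {x : ℕ → E}
    (h : ∀ f : E →L[ℝ] ℝ, (∀ v : E, 0 ≤ v → 0 ≤ f v) →
      Tendsto (fun n => f |x n|) atTop (nhds 0)) :
    ∃ C : ℝ, 0 ≤ C ∧ ∀ n, ‖x n‖ ≤ C := by
  set T : ℕ → StrongDual ℝ E →L[ℝ] ℝ :=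
    fun n => NormedSpace.inclusionInDoubleDual ℝ E (x n) with hT
  have hpt : ∀ g : StrongDual ℝ E, ∃ C, ∀ n, ‖T n g‖ ≤ C := by
    intro g
    have h1 := h (pClm g) (pClm_nonneg g)
    have h2 := h (pClm (-g)) (pClm_nonneg (-g))
    have h3 : Tendsto (fun n => pClm g |x n| + pClm (-g) |x n|) atTop (nhds 0) := by
      simpa using h1.add h2
    obtain ⟨C, hC⟩ := h3.bddAbove_range
    refine ⟨C, fun n => ?_⟩
    have h4 := abs_apply_le g (x n)
    have h5 : pClm g |x n| + pClm (-g) |x n| ≤ C :=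
      hC (Set.mem_range_self n)
    have h6 : ‖T n g‖ = |g (x n)| := by
      rw [hT]
      simp [NormedSpace.dual_def, Real.norm_eq_abs]
    rw [h6]
    linarith
  obtain ⟨C', hC'⟩ := banach_steinhaus hpt
  refine ⟨max C' 0, le_max_right _ _, fun n => ?_⟩
  refine NormedSpace.norm_le_dual_bound ℝ (x n) (le_max_right _ _) fun g => ?_
  have h7 : ‖T n g‖ ≤ ‖T n‖ * ‖g‖ := (T n).le_opNorm g
  have h8 : ‖T n‖ * ‖g‖ ≤ max C' 0 * ‖g‖ :=
    mul_le_mul_of_nonneg_right ((hC' n).trans (le_max_left _ _)) (norm_nonneg g)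
  have h9 : ‖T n g‖ = ‖g (x n)‖ := by rw [hT]; simp [NormedSpace.dual_def]
  rw [← h9]
  linarith

end AWNAux

namespace AWNAux

variable {E : Type*} [NormedAddCommGroup E] [Lattice E] [HasSolidNorm E] [IsOrderedAddMonoid E] [NormedSpace ℝ E] [PosSMulStrictMono ℝ E] [PosSMulReflectLT ℝ E]

/-! ### Lattice estimates for series -/

lemma smul_le_abs_smul_abs (c : ℝ) (v : E) : c • v ≤ |c| • |v| := by
  rcases le_total 0 c with hc | hc
  · rw [abs_of_nonneg hc]
    exact smul_le_smul_of_nonneg_left (le_abs_self v) hc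
  · rw [abs_of_nonpos hc]
    have h1 : c • v = (-c) • (-v) := by rw [neg_smul, smul_neg, neg_neg]
    rw [h1]
    exact smul_le_smul_of_nonneg_left (neg_le_abs v) (neg_nonneg.mpr hc)

lemma abs_smul_le (c : ℝ) (v : E) : |c • v| ≤ |c| • |v| := by
  refine abs_le'.mpr ⟨smul_le_abs_smul_abs c v, ?_⟩
  have h1 : -(c • v) = c • (-v) := (smul_neg c v).symm
  rw [h1]
  have := smul_le_abs_smul_abs c (-v)
  rwa [abs_neg] at this

lemma abs_sum_le' (s : Finset ℕ) (v : ℕ → E) :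
    |∑ i ∈ s, v i| ≤ ∑ i ∈ s, |v i| := by
  classical
  induction s using Finset.cons_induction with
  | empty => simp
  | cons i s hi ih =>
    rw [Finset.sum_cons, Finset.sum_cons]
    exact (abs_add_le _ _).trans (add_le_add_right ih _)

lemma continuous_abs' : Continuous fun a : E => |a| := by
  have lip : LipschitzWith 1 fun a : E => |a| := by
    refine LipschitzWith.of_dist_le_mul fun a b => ?_
    rw [dist_eq_norm, dist_eq_norm, NNReal.coe_one, one_mul]
    exact norm_abs_sub_abs a b

  exact lip.continuous

variable [CompleteSpace E]

lemma f_abs_tsum_le {x : ℕ → E} {C : ℝ} (hC : ∀ n, ‖x n‖ ≤ C)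
    {c : ℕ → ℝ} (hc : Summable fun n => |c n|) {w : E}
    (hw : HasSum (fun n => c n • x n) w)
    (f : E →L[ℝ] ℝ) (hf : ∀ v : E, 0 ≤ v → 0 ≤ f v) :
    f |w| ≤ ∑' n, |c n| * f |x n| := by
  have hsum2 : Summable fun n => |c n| • |x n| := by
    refine Summable.of_norm_bounded (g := fun n => |c n| * C) (hc.mul_right C) fun n => ?_
    rw [norm_smul, Real.norm_eq_abs, abs_abs, norm_abs_eq_norm]
    exact mul_le_mul_of_nonneg_left (hC n) (abs_nonneg _)
  set W := ∑' n, |c n| • |x n| with hW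
  have habs : |w| ≤ W := by
    have htend : Tendsto (fun s : Finset ℕ => |∑ i ∈ s, c i • x i|) atTop (nhds |w|) :=
      (continuous_abs'.tendsto w).comp hw
    refine le_of_tendsto htend (Eventually.of_forall fun s => ?_)
    calc |∑ i ∈ s, c i • x i| ≤ ∑ i ∈ s, |c i • x i| := abs_sum_le' s _
    _ ≤ ∑ i ∈ s, |c i| • |x i| := Finset.sum_le_sum fun i _ => abs_smul_le (c i) (x i)
    _ ≤ W := Summable.sum_le_tsum s (fun i _ => smul_nonneg (abs_nonneg _) (abs_nonneg _)) hsum2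
  have h1 : f |w| ≤ f W := by
    have := hf (W - |w|) (sub_nonneg.mpr habs)
    rw [map_sub] at this
    linarith
  have h2 : f W = ∑' n, |c n| * f |x n| := by
    rw [hW, ContinuousLinearMap.map_tsum f hsum2]
    congr 1
    funext n
    rw [_root_.map_smul, smul_eq_mul]
  linarith

end AWNAux

namespace AWNAux

variable {E : Type*} [NormedAddCommGroup E] [Lattice E] [HasSolidNorm E] [IsOrderedAddMonoid E] [NormedSpace ℝ E] [PosSMulStrictMono ℝ E] [PosSMulReflectLT ℝ E]
  [CompleteSpace E]

/-! ### The main extraction lemma -/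

lemma main_extract (x : ℕ → E)
    (hxt : ∀ f : E →L[ℝ] ℝ, (∀ v : E, 0 ≤ v → 0 ≤ f v) →
      Tendsto (fun n => f |x n|) atTop (nhds 0))
    {C : ℝ} (hC0 : 0 ≤ C) (hC : ∀ n, ‖x n‖ ≤ C)
    (z : ℕ → E)
    (hz : ∀ k, z k ∈ {z : E | ∃ a : ℕ → ℝ, Summable (fun n => |a n|) ∧ (∑' n, |a n|) ≤ 1 ∧
          HasSum (fun n => a n • x n) z}) :
    ∃ z' ∈ {z : E | ∃ a : ℕ → ℝ, Summable (fun n => |a n|) ∧ (∑' n, |a n|) ≤ 1 ∧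
          HasSum (fun n => a n • x n) z},
      ∃ φ : ℕ → ℕ, StrictMono φ ∧
        ∀ f : E →L[ℝ] ℝ, (∀ v : E, 0 ≤ v → 0 ≤ f v) →
          Tendsto (fun k => f |z (φ k) - z'|) atTop (nhds 0) := by
  classical
  choose a ha1 ha2 ha3 using hz
  have habs1 : ∀ k n, |a k n| ≤ 1 := fun k n =>
    ((ha1 k).le_tsum n fun m _ => abs_nonneg _).trans (ha2 k)
  -- extract a pointwise convergent subsequence of coefficients
  have hset : {b : ℕ → ℝ | ∀ n, b n ∈ Set.Icc (-1 : ℝ) 1}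
      = Set.pi Set.univ fun _ : ℕ => Set.Icc (-1 : ℝ) 1 := by
    ext b
    constructor
    · intro h n _; exact h n
    · intro h n; exact h n (Set.mem_univ n)
  have hcomp : IsSeqCompact {b : ℕ → ℝ | ∀ n, b n ∈ Set.Icc (-1 : ℝ) 1} := by
    rw [hset]
    exact (isCompact_univ_pi fun _ => isCompact_Icc).isSeqCompact
  have hmem : ∀ k, a k ∈ {b : ℕ → ℝ | ∀ n, b n ∈ Set.Icc (-1 : ℝ) 1} := by
    intro k n
    exact ⟨(abs_le.mp (habs1 k n)).1, (abs_le.mp (habs1 k n)).2⟩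
  obtain ⟨b, _, φ, hφ, hconv⟩ := hcomp hmem
  have hptw : ∀ n, Tendsto (fun k => a (φ k) n) atTop (nhds (b n)) := fun n =>
    tendsto_pi_nhds.mp hconv n
  -- properties of the limit coefficients
  have hbsum : ∀ s : Finset ℕ, ∑ n ∈ s, |b n| ≤ 1 := by
    intro s
    have ht : Tendsto (fun k => ∑ n ∈ s, |a (φ k) n|) atTop (nhds (∑ n ∈ s, |b n|)) :=
      tendsto_finset_sum s fun n _ => (hptw n).abs
    refine le_of_tendsto ht (Eventually.of_forall fun k => ?_)
    exact (Summable.sum_le_tsum s (fun i _ => abs_nonneg _) (ha1 _)).trans (ha2 _)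
  have hbsummable : Summable fun n => |b n| :=
    summable_of_sum_le (fun n => abs_nonneg _) hbsum
  have hbts : (∑' n, |b n|) ≤ 1 := Summable.tsum_le_of_sum_le hbsummable hbsum
  have hsz : Summable fun n => b n • x n := by
    refine Summable.of_norm_bounded (g := fun n => |b n| * C) (hbsummable.mul_right C) fun n => ?_
    rw [norm_smul, Real.norm_eq_abs]
    exact mul_le_mul_of_nonneg_left (hC n) (abs_nonneg _)
  refine ⟨∑' n, b n • x n, ⟨b, hbsummable, hbts, hsz.hasSum⟩, φ, hφ, ?_⟩
  intro f hf
  set z' := ∑' n, b n • x n with hz'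
  -- difference series
  have hdiff : ∀ k, HasSum (fun n => (a (φ k) n - b n) • x n) (z (φ k) - z') := by
    intro k
    have := (ha3 (φ k)).sub hsz.hasSum
    simpa [sub_smul] using this
  have habsub : ∀ (u v : ℝ), |u - v| ≤ |u| + |v| := by
    intro u v
    calc |u - v| = |u + -v| := by rw [sub_eq_add_neg]
    _ ≤ |u| + |-v| := abs_add_le _ _
    _ = |u| + |v| := by rw [abs_neg]
  have hcsummable : ∀ k, Summable fun n => |a (φ k) n - b n| := by
    intro k
    exact Summable.of_nonneg_of_le (fun n => abs_nonneg _)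
      (fun n => habsub _ _) ((ha1 (φ k)).add hbsummable)
  have hcts2 : ∀ k, (∑' n, |a (φ k) n - b n|) ≤ 2 := by
    intro k
    calc (∑' n, |a (φ k) n - b n|) ≤ ∑' n, (|a (φ k) n| + |b n|) :=
      Summable.tsum_le_tsum (fun n => habsub _ _) (hcsummable k) ((ha1 (φ k)).add hbsummable)
    _ = (∑' n, |a (φ k) n|) + ∑' n, |b n| := Summable.tsum_add (ha1 _) hbsummable
    _ ≤ 2 := by linarith [ha2 (φ k), hbts]
  have hfx_nonneg : ∀ n, (0 : ℝ) ≤ f |x n| := fun n => hf _ (abs_nonneg _)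
  have hfbound : ∀ n, f |x n| ≤ ‖f‖ * C := by
    intro n
    calc f |x n| ≤ ‖f |x n|‖ := le_abs_self _
    _ ≤ ‖f‖ * ‖|x n|‖ := f.le_opNorm _
    _ = ‖f‖ * ‖x n‖ := by rw [norm_abs_eq_norm]
    _ ≤ ‖f‖ * C := mul_le_mul_of_nonneg_left (hC n) (norm_nonneg f)
  have hsummS : ∀ k, Summable fun n => |a (φ k) n - b n| * f |x n| := by
    intro k
    refine Summable.of_nonneg_of_le
      (fun n => mul_nonneg (abs_nonneg _) (hfx_nonneg n)) (fun n => ?_)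
      ((hcsummable k).mul_right (‖f‖ * C))
    exact mul_le_mul_of_nonneg_left (hfbound n) (abs_nonneg _)
  have hle : ∀ k, f |z (φ k) - z'| ≤ ∑' n, |a (φ k) n - b n| * f |x n| := fun k =>
    f_abs_tsum_le hC (hcsummable k) (hdiff k) f hf
  -- the dominating sequence tends to 0
  have hS : Tendsto (fun k => ∑' n, |a (φ k) n - b n| * f |x n|) atTop (nhds 0) := by
    rw [Metric.tendsto_atTop]
    intro ε hε
    obtain ⟨N, hN⟩ := Metric.tendsto_atTop.mp (hxt f hf) (ε / 8) (by linarith)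
    have hN' : ∀ n, N ≤ n → f |x n| ≤ ε / 8 := by
      intro n hn
      have := hN n hn
      rw [Real.dist_eq, sub_zero, abs_of_nonneg (hfx_nonneg n)] at this
      linarith
    have hhead : Tendsto
        (fun k => ∑ n ∈ Finset.range N, |a (φ k) n - b n| * f |x n|) atTop (nhds 0) := by
      have hterm : ∀ n, Tendsto (fun k => |a (φ k) n - b n| * f |x n|) atTop (nhds 0) := by
        intro n
        have h1 : Tendsto (fun k => a (φ k) n - b n) atTop (nhds 0) := by
          simpa using (hptw n).sub (tendsto_const_nhds (x := b n))
        have h2 := h1.abs.mul_const (f |x n|)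
        simpa using h2
      have := tendsto_finset_sum (Finset.range N) fun n _ => hterm n
      simpa using this
    obtain ⟨K₀, hK₀⟩ := Metric.tendsto_atTop.mp hhead (ε / 2) (by linarith)
    refine ⟨K₀, fun k hk => ?_⟩
    have hsplit := Summable.sum_add_tsum_nat_add (f := fun n => |a (φ k) n - b n| * f |x n|) N (hsummS k)
    have hsplit2 := Summable.sum_add_tsum_nat_add (f := fun n => |a (φ k) n - b n|) N (hcsummable k)
    beta_reduce at hsplit hsplit2
    have htail_sum : (∑' i, |a (φ k) (i + N) - b (i + N)|) ≤ 2 := by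
      have h8 : 0 ≤ ∑ n ∈ Finset.range N, |a (φ k) n - b n| :=
        Finset.sum_nonneg fun _ _ => abs_nonneg _
      linarith [hcts2 k]
    have htail : (∑' i, |a (φ k) (i + N) - b (i + N)| * f |x (i + N)|) ≤ ε / 4 := by
      have hsum1 : Summable fun i : ℕ => |a (φ k) (i + N) - b (i + N)| :=
        (hcsummable k).comp_injective (add_left_injective N)
      have hsum2' : Summable fun i : ℕ => |a (φ k) (i + N) - b (i + N)| * f |x (i + N)| :=
        (hsummS k).comp_injective (add_left_injective N)
      have step1 : (∑' i, |a (φ k) (i + N) - b (i + N)| * f |x (i + N)|)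
          ≤ ∑' i, |a (φ k) (i + N) - b (i + N)| * (ε / 8) :=
        Summable.tsum_le_tsum
          (fun i => mul_le_mul_of_nonneg_left (hN' _ (Nat.le_add_left N i)) (abs_nonneg _))
          hsum2' (hsum1.mul_right _)
      have step2 : (∑' i, |a (φ k) (i + N) - b (i + N)| * (ε / 8))
          = (∑' i, |a (φ k) (i + N) - b (i + N)|) * (ε / 8) := tsum_mul_right
      have step3 : (∑' i, |a (φ k) (i + N) - b (i + N)|) * (ε / 8) ≤ 2 * (ε / 8) :=
        mul_le_mul_of_nonneg_right htail_sum (by linarith)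
      linarith
    have hheadlt : (∑ n ∈ Finset.range N, |a (φ k) n - b n| * f |x n|) < ε / 2 := by
      have := hK₀ k hk
      rw [Real.dist_eq, sub_zero] at this
      exact lt_of_abs_lt this
    have hSnonneg : (0 : ℝ) ≤ ∑' n, |a (φ k) n - b n| * f |x n| :=
      tsum_nonneg fun n => mul_nonneg (abs_nonneg _) (hfx_nonneg n)
    rw [Real.dist_eq, sub_zero, abs_of_nonneg hSnonneg]
    linarith
  -- squeeze
  refine tendsto_of_tendsto_of_tendsto_of_le_of_le tendsto_const_nhds hS
    (fun k => hf _ (abs_nonneg _)) hle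

end AWNAux

/-- For an absolutely weakly null sequence `(x_n)` in a Banach lattice, the set of sums of
series `∑ a_n x_n` with `∑ |a_n| ≤ 1` is absolutely weakly sequentially compact, and in
particular norm closed. -/
theorem absWeakNull_series_set_seqCompact {E : Type*} [NormedAddCommGroup E] [Lattice E] [HasSolidNorm E] [IsOrderedAddMonoid E] [NormedSpace ℝ E] [PosSMulStrictMono ℝ E] [PosSMulReflectLT ℝ E] [CompleteSpace E] (x : ℕ → E)
    (hx : Tendsto x atTop (@nhds E (absWeakTopology E) 0)) :
    @IsSeqCompact E (absWeakTopology E)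
        {z : E | ∃ a : ℕ → ℝ, Summable (fun n => |a n|) ∧ (∑' n, |a n|) ≤ 1 ∧
          HasSum (fun n => a n • x n) z} ∧
      IsClosed {z : E | ∃ a : ℕ → ℝ, Summable (fun n => |a n|) ∧ (∑' n, |a n|) ≤ 1 ∧
          HasSum (fun n => a n • x n) z} := by
  classical
  have hxt : ∀ f : E →L[ℝ] ℝ, (∀ v : E, 0 ≤ v → 0 ≤ f v) →
      Tendsto (fun n => f |x n|) atTop (nhds 0) := by
    intro f hf
    have := AWNAux.tendsto_absWeak_iff.mp hx f hf
    simpa using this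
  obtain ⟨C, hC0, hC⟩ := AWNAux.bounded_of_absWeakNull hxt
  constructor
  · intro z hz
    obtain ⟨z', hz', φ, hφ, hcv⟩ := AWNAux.main_extract x hxt hC0 hC z hz
    exact ⟨z', hz', φ, hφ, AWNAux.tendsto_absWeak_iff.mpr fun f hf => hcv f hf⟩
  · rw [← isSeqClosed_iff_isClosed]
    intro z p hz hzp
    obtain ⟨z', hz', φ, hφ, hcv⟩ := AWNAux.main_extract x hxt hC0 hC z hz
    have hzp' : Tendsto (fun k => z (φ k)) atTop (nhds p) := hzp.comp hφ.tendsto_atTop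
    have hdiff0 : ∀ f : E →L[ℝ] ℝ, (∀ v : E, 0 ≤ v → 0 ≤ f v) → f |z' - p| = 0 := by
      intro f hf
      have h1 : Tendsto (fun k => f |z (φ k) - p|) atTop (nhds 0) := by
        have h2 : Tendsto (fun k => z (φ k) - p) atTop (nhds 0) := by
          simpa using hzp'.sub (tendsto_const_nhds (x := p))
        have h3 : Tendsto (fun k => ‖f‖ * ‖z (φ k) - p‖) atTop (nhds 0) := by
          have := (h2.norm).const_mul ‖f‖
          simpa using this
        refine tendsto_of_tendsto_of_tendsto_of_le_of_le tendsto_const_nhds h3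
          (fun k => hf _ (abs_nonneg _)) (fun k => ?_)
        calc f |z (φ k) - p| ≤ ‖f |z (φ k) - p|‖ := le_abs_self _
        _ ≤ ‖f‖ * ‖|z (φ k) - p|‖ := f.le_opNorm _
        _ = ‖f‖ * ‖z (φ k) - p‖ := by rw [norm_abs_eq_norm]
      have h4 : ∀ k, f |z' - p| ≤ f |z (φ k) - z'| + f |z (φ k) - p| := by
        intro k
        have habs : |z' - p| ≤ |z (φ k) - z'| + |z (φ k) - p| := by
          calc |z' - p| = |(-(z (φ k) - z')) + (z (φ k) - p)| := by congr 1; abel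
          _ ≤ |(-(z (φ k) - z'))| + |z (φ k) - p| := abs_add_le _ _
          _ = |z (φ k) - z'| + |z (φ k) - p| := by rw [abs_neg]
        have h5 := hf _ (sub_nonneg.mpr habs)
        simp only [map_sub, map_add] at h5
        linarith
      have h6 : Tendsto (fun k => f |z (φ k) - z'| + f |z (φ k) - p|) atTop (nhds 0) := by
        simpa using (hcv f hf).add h1
      have h7 : f |z' - p| ≤ 0 := ge_of_tendsto h6 (Eventually.of_forall h4)
      exact le_antisymm h7 (hf _ (abs_nonneg _))
    have h8 : z' - p = 0 := AWNAux.eq_zero_of_forall_pos _ hdiff0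
    have h9 : p = z' := by
      have := sub_eq_zero.mp h8
      exact this.symm
    rw [h9]
    exact hz'
end
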